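/- The velocity function ψ of the Lax-curve parametrisation is twice continuously differentiable at the base pressure: let γ > 1, ρ_k > 0, p_k > 0, c_k = √(γ p_k/ρ_k) and μ² = (γ−1)/(γ+1), and define ψ : (0, ∞) → ℝ by ψ(σ) = (2c_k/(γ−1))·((σ/p_k)^((γ−1)/(2γ)) − 1) for σ ≤ p_k and ψ(σ) = (σ − p_k)·((1−μ²)/(ρ_k(σ + μ²p_k)))^(1/2) for σ > p_k. Then ψ is ContDiffAt of order 2 at σ = p_k (i.e., twice continuously differentiable at p_k). -/

import Mathlib

/-- The velocity function `ψ` of the Lax-curve parametrisation: rarefaction branch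
for `σ ≤ p`, shock (Rankine–Hugoniot) branch for `σ > p`, based at density `ρ` and
pressure `p`, with sound speed `c = √(γp/ρ)` and `μ² = (γ−1)/(γ+1)`. -/
noncomputable def laxPsi (γ ρ p : ℝ) (σ : ℝ) : ℝ :=
  if σ ≤ p then
    (2 * Real.sqrt (γ * p / ρ) / (γ - 1)) * ((σ / p) ^ ((γ - 1) / (2 * γ)) - 1)
  else
    (σ - p) * Real.sqrt ((1 - (γ - 1) / (γ + 1)) / (ρ * (σ + ((γ - 1) / (γ + 1)) * p)))

open Real Set Filter

namespace LaxAux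

/-- rarefaction branch -/
noncomputable def rb (γ ρ p σ : ℝ) : ℝ :=
  (2 * Real.sqrt (γ * p / ρ) / (γ - 1)) * ((σ / p) ^ ((γ - 1) / (2 * γ)) - 1)

/-- shock branch, rewritten -/
noncomputable def sb (γ ρ p σ : ℝ) : ℝ :=
  (σ - p) * (Real.sqrt ((1 - (γ - 1) / (γ + 1)) / ρ) *
    (σ + ((γ - 1) / (γ + 1)) * p) ^ (-(1/2) : ℝ))

noncomputable def rb1 (γ ρ p σ : ℝ) : ℝ :=
  (2 * Real.sqrt (γ * p / ρ) / (γ - 1)) *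
    ((γ - 1) / (2 * γ) * (σ / p) ^ ((γ - 1) / (2 * γ) - 1) * (1 / p))

noncomputable def sb1 (γ ρ p σ : ℝ) : ℝ :=
  Real.sqrt ((1 - (γ - 1) / (γ + 1)) / ρ) * (σ + ((γ - 1) / (γ + 1)) * p) ^ (-(1/2) : ℝ)
  + (σ - p) * (Real.sqrt ((1 - (γ - 1) / (γ + 1)) / ρ) *
      (-(1/2) * (σ + ((γ - 1) / (γ + 1)) * p) ^ (-(3/2) : ℝ)))

noncomputable def rb2 (γ ρ p σ : ℝ) : ℝ :=
  (2 * Real.sqrt (γ * p / ρ) / (γ - 1)) *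
    ((γ - 1) / (2 * γ) *
      (((γ - 1) / (2 * γ) - 1) * (σ / p) ^ ((γ - 1) / (2 * γ) - 1 - 1) * (1 / p)) * (1 / p))

noncomputable def sb2 (γ ρ p σ : ℝ) : ℝ :=
  2 * (Real.sqrt ((1 - (γ - 1) / (γ + 1)) / ρ) *
        (-(1/2) * (σ + ((γ - 1) / (γ + 1)) * p) ^ (-(3/2) : ℝ)))
  + (σ - p) * (Real.sqrt ((1 - (γ - 1) / (γ + 1)) / ρ) *
      ((3/4) * (σ + ((γ - 1) / (γ + 1)) * p) ^ (-(5/2) : ℝ)))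

noncomputable def F (γ ρ p σ : ℝ) : ℝ := if σ ≤ p then rb γ ρ p σ else sb γ ρ p σ
noncomputable def D1 (γ ρ p σ : ℝ) : ℝ := if σ ≤ p then rb1 γ ρ p σ else sb1 γ ρ p σ
noncomputable def D2 (γ ρ p σ : ℝ) : ℝ := if σ ≤ p then rb2 γ ρ p σ else sb2 γ ρ p σ

lemma rpow_neg_half {x : ℝ} (hx : 0 < x) : x ^ (-(1/2) : ℝ) = Real.sqrt x⁻¹ := by
  rw [Real.sqrt_inv, Real.sqrt_eq_rpow, ← Real.rpow_neg hx.le]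

lemma rpow_neg_3half {x : ℝ} (hx : 0 < x) : x ^ (-(3/2) : ℝ) = Real.sqrt (x ^ 3)⁻¹ := by
  have h : (x ^ (3 : ℕ) : ℝ) ^ (-(1/2) : ℝ) = x ^ (-(3/2) : ℝ) := by
    rw [← Real.rpow_natCast x 3, ← Real.rpow_mul hx.le]
    norm_num
  rw [← h, rpow_neg_half (pow_pos hx 3)]

lemma sqrt_scale {a t b : ℝ} (ha : 0 ≤ a) (ht : 0 ≤ t) (h : a * t ^ 2 = b) :
    Real.sqrt a * t = Real.sqrt b := by
  rw [← h, Real.sqrt_mul ha, Real.sqrt_sq ht]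

section

variable {γ ρ p : ℝ} (hγ : 1 < γ) (hρ : 0 < ρ) (hp : 0 < p)
include hγ hρ hp

lemma hasDerivAt_rb {y : ℝ} (hy : y ≠ 0) : HasDerivAt (rb γ ρ p) (rb1 γ ρ p y) y := by
  have h0 : HasDerivAt (fun σ : ℝ => σ / p) (1 / p) y := (hasDerivAt_id y).div_const p
  have h1 : HasDerivAt (fun x : ℝ => x ^ ((γ - 1) / (2 * γ)))
      ((γ - 1) / (2 * γ) * (y / p) ^ ((γ - 1) / (2 * γ) - 1)) (y / p) :=
    Real.hasDerivAt_rpow_const (Or.inl (div_ne_zero hy hp.ne'))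
  exact ((h1.comp y h0).sub_const 1).const_mul _

lemma hasDerivAt_rb1 {y : ℝ} (hy : y ≠ 0) : HasDerivAt (rb1 γ ρ p) (rb2 γ ρ p y) y := by
  have h0 : HasDerivAt (fun σ : ℝ => σ / p) (1 / p) y := (hasDerivAt_id y).div_const p
  have h1 : HasDerivAt (fun x : ℝ => x ^ ((γ - 1) / (2 * γ) - 1))
      (((γ - 1) / (2 * γ) - 1) * (y / p) ^ ((γ - 1) / (2 * γ) - 1 - 1)) (y / p) :=
    Real.hasDerivAt_rpow_const (Or.inl (div_ne_zero hy hp.ne'))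
  exact ((((h1.comp y h0).const_mul ((γ - 1) / (2 * γ))).mul_const (1 / p)).const_mul _)

lemma hasDerivAt_sb {y : ℝ} (hy : y + ((γ - 1) / (γ + 1)) * p ≠ 0) :
    HasDerivAt (sb γ ρ p) (sb1 γ ρ p y) y := by
  have hadd : HasDerivAt (fun σ : ℝ => σ + ((γ - 1) / (γ + 1)) * p) 1 y :=
    (hasDerivAt_id y).add_const _
  have hw : HasDerivAt (fun σ : ℝ => (σ + ((γ - 1) / (γ + 1)) * p) ^ (-(1/2) : ℝ))
      ((-(1/2)) * (y + ((γ - 1) / (γ + 1)) * p) ^ ((-(1/2) : ℝ) - 1) * 1) y :=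
    by
      have h2 := Real.hasDerivAt_rpow_const (x := y + ((γ - 1) / (γ + 1)) * p) (p := (-(1/2) : ℝ))
        (Or.inl hy)
      exact h2.comp y hadd
  have hu : HasDerivAt (fun σ : ℝ => σ - p) 1 y := (hasDerivAt_id y).sub_const p
  have h := hu.mul (hw.const_mul (Real.sqrt ((1 - (γ - 1) / (γ + 1)) / ρ)))
  have e1 : ((-(1/2) : ℝ) - 1) = (-(3/2) : ℝ) := by norm_num
  rw [e1] at h
  refine h.congr_deriv ?_
  unfold sb1; ring

lemma hasDerivAt_sb1 {y : ℝ} (hy : y + ((γ - 1) / (γ + 1)) * p ≠ 0) :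
    HasDerivAt (sb1 γ ρ p) (sb2 γ ρ p y) y := by
  have hadd : HasDerivAt (fun σ : ℝ => σ + ((γ - 1) / (γ + 1)) * p) 1 y :=
    (hasDerivAt_id y).add_const _
  have hu : HasDerivAt (fun σ : ℝ => σ - p) 1 y := (hasDerivAt_id y).sub_const p
  have hw1 : HasDerivAt (fun σ : ℝ => (σ + ((γ - 1) / (γ + 1)) * p) ^ (-(1/2) : ℝ))
      ((-(1/2)) * (y + ((γ - 1) / (γ + 1)) * p) ^ ((-(1/2) : ℝ) - 1) * 1) y :=
    by
      have h2 := Real.hasDerivAt_rpow_const (x := y + ((γ - 1) / (γ + 1)) * p) (p := (-(1/2) : ℝ))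
        (Or.inl hy)
      exact h2.comp y hadd
  have hw3 : HasDerivAt (fun σ : ℝ => (σ + ((γ - 1) / (γ + 1)) * p) ^ (-(3/2) : ℝ))
      ((-(3/2)) * (y + ((γ - 1) / (γ + 1)) * p) ^ ((-(3/2) : ℝ) - 1) * 1) y :=
    by
      have h2 := Real.hasDerivAt_rpow_const (x := y + ((γ - 1) / (γ + 1)) * p) (p := (-(3/2) : ℝ))
        (Or.inl hy)
      exact h2.comp y hadd
  have e1 : ((-(1/2) : ℝ) - 1) = (-(3/2) : ℝ) := by norm_num
  have e2 : ((-(3/2) : ℝ) - 1) = (-(5/2) : ℝ) := by norm_num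
  rw [e1] at hw1; rw [e2] at hw3
  have h := (hw1.const_mul (Real.sqrt ((1 - (γ - 1) / (γ + 1)) / ρ))).add
    (hu.mul ((hw3.const_mul (-(1/2))).const_mul (Real.sqrt ((1 - (γ - 1) / (γ + 1)) / ρ))))
  refine h.congr_deriv ?_
  unfold sb2; ring

lemma hA : (0:ℝ) < 1 - (γ - 1) / (γ + 1) := by
  rw [sub_pos]
  exact (div_lt_one (by linarith)).mpr (by linarith)

lemma hP : (0:ℝ) < p + ((γ - 1) / (γ + 1)) * p := by
  have h1 : (0:ℝ) ≤ ((γ - 1) / (γ + 1)) * p :=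
    mul_nonneg (div_nonneg (by linarith) (by linarith)) hp.le
  linarith

lemma I1 : rb1 γ ρ p p = sb1 γ ρ p p := by
  have hγ0 : γ ≠ 0 := by linarith
  have hγ1 : γ - 1 ≠ 0 := by linarith
  have hγp1 : γ + 1 ≠ 0 := by linarith
  have hPp := hP hγ hρ hp
  have hAp := hA hγ hρ hp (p := p)
  have hAρ : (0:ℝ) ≤ (1 - (γ - 1) / (γ + 1)) / ρ := div_nonneg hAp.le hρ.le
  have hPe : p + (γ - 1) / (γ + 1) * p = 2 * γ * p / (γ + 1) := by field_simp; ring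
  unfold rb1 sb1
  rw [div_self hp.ne', Real.one_rpow, sub_self, zero_mul, add_zero, rpow_neg_half hPp,
    ← Real.sqrt_mul hAρ]
  have L : 2 * Real.sqrt (γ * p / ρ) / (γ - 1) * ((γ - 1) / (2 * γ) * 1 * (1 / p))
      = Real.sqrt (γ * p / ρ) * (1 / (γ * p)) := by
    field_simp
  rw [L]
  refine sqrt_scale (div_nonneg (mul_nonneg (by linarith) hp.le) hρ.le)
    (by positivity) ?_
  rw [hPe]
  field_simp
  ring

lemma I2 : rb2 γ ρ p p = sb2 γ ρ p p := by
  have hγ0 : γ ≠ 0 := by linarith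
  have hγ1 : γ - 1 ≠ 0 := by linarith
  have hγp1 : γ + 1 ≠ 0 := by linarith
  have hPp := hP hγ hρ hp
  have hAp := hA hγ hρ hp (p := p)
  have hAρ : (0:ℝ) ≤ (1 - (γ - 1) / (γ + 1)) / ρ := div_nonneg hAp.le hρ.le
  have hPe : p + (γ - 1) / (γ + 1) * p = 2 * γ * p / (γ + 1) := by field_simp; ring
  unfold rb2 sb2
  rw [div_self hp.ne', Real.one_rpow, sub_self, zero_mul, add_zero, rpow_neg_3half hPp]
  have L : 2 * Real.sqrt (γ * p / ρ) / (γ - 1) *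
      ((γ - 1) / (2 * γ) * (((γ - 1) / (2 * γ) - 1) * 1 * (1 / p)) * (1 / p))
      = -(Real.sqrt (γ * p / ρ) * ((γ + 1) / (2 * γ ^ 2 * p ^ 2))) := by
    field_simp; ring
  have R : 2 * (Real.sqrt ((1 - (γ - 1) / (γ + 1)) / ρ) *
        (-(1/2) * Real.sqrt (((p + (γ - 1) / (γ + 1) * p) ^ 3)⁻¹)))
      = -(Real.sqrt ((1 - (γ - 1) / (γ + 1)) / ρ) *
          Real.sqrt (((p + (γ - 1) / (γ + 1) * p) ^ 3)⁻¹)) := by ring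
  rw [L, R, ← Real.sqrt_mul hAρ, neg_inj]
  refine sqrt_scale (div_nonneg (mul_nonneg (by linarith) hp.le) hρ.le)
    (by positivity) ?_
  rw [hPe]
  field_simp
  ring

lemma rb_base : rb γ ρ p p = 0 := by
  unfold rb
  rw [div_self hp.ne', Real.one_rpow, sub_self, mul_zero]

lemma sb_base : sb γ ρ p p = 0 := by
  unfold sb
  rw [sub_self, zero_mul]

lemma hasDerivAt_F {y : ℝ} (hy : 0 < y) : HasDerivAt (F γ ρ p) (D1 γ ρ p y) y := by
  have hB : (0:ℝ) ≤ ((γ - 1) / (γ + 1)) * p :=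
    mul_nonneg (div_nonneg (by linarith) (by linarith)) hp.le
  rcases lt_trichotomy y p with hlt | heq | hgt
  · have heq : F γ ρ p =ᶠ[nhds y] rb γ ρ p :=
      eventuallyEq_of_mem (Iio_mem_nhds hlt) fun σ hσ => if_pos (le_of_lt hσ)
    rw [D1, if_pos hlt.le]
    exact (hasDerivAt_rb hγ hρ hp hy.ne').congr_of_eventuallyEq heq
  · rw [heq]
    have hIic : HasDerivWithinAt (F γ ρ p) (rb1 γ ρ p p) (Iic p) p :=
      ((hasDerivAt_rb hγ hρ hp hp.ne').hasDerivWithinAt).congr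
        (fun σ hσ => if_pos hσ) (if_pos le_rfl)
    have hIci : HasDerivWithinAt (F γ ρ p) (rb1 γ ρ p p) (Ici p) p := by
      rw [I1 hγ hρ hp]
      refine ((hasDerivAt_sb hγ hρ hp (by linarith)).hasDerivWithinAt).congr
        (fun σ hσ => ?_) ?_
      · rcases eq_or_lt_of_le (Set.mem_Ici.mp hσ) with h | h
        · rw [← h, F, if_pos le_rfl, rb_base hγ hρ hp, sb_base hγ hρ hp]
        · rw [F, if_neg (not_le.mpr h)]
      · rw [F, if_pos le_rfl, rb_base hγ hρ hp, sb_base hγ hρ hp]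
    have := hIic.union hIci
    rw [Set.Iic_union_Ici, hasDerivWithinAt_univ] at this
    rwa [D1, if_pos le_rfl]
  · have heq : F γ ρ p =ᶠ[nhds y] sb γ ρ p :=
      eventuallyEq_of_mem (Ioi_mem_nhds hgt) fun σ hσ => if_neg (not_le.mpr hσ)
    rw [D1, if_neg (not_le.mpr hgt)]
    exact (hasDerivAt_sb hγ hρ hp (by linarith)).congr_of_eventuallyEq heq

lemma hasDerivAt_D1 {y : ℝ} (hy : 0 < y) : HasDerivAt (D1 γ ρ p) (D2 γ ρ p y) y := by
  have hB : (0:ℝ) ≤ ((γ - 1) / (γ + 1)) * p :=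
    mul_nonneg (div_nonneg (by linarith) (by linarith)) hp.le
  rcases lt_trichotomy y p with hlt | heq | hgt
  · have heq : D1 γ ρ p =ᶠ[nhds y] rb1 γ ρ p :=
      eventuallyEq_of_mem (Iio_mem_nhds hlt) fun σ hσ => if_pos (le_of_lt hσ)
    rw [D2, if_pos hlt.le]
    exact (hasDerivAt_rb1 hγ hρ hp hy.ne').congr_of_eventuallyEq heq
  · rw [heq]
    have hIic : HasDerivWithinAt (D1 γ ρ p) (rb2 γ ρ p p) (Iic p) p :=
      ((hasDerivAt_rb1 hγ hρ hp hp.ne').hasDerivWithinAt).congr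
        (fun σ hσ => if_pos hσ) (if_pos le_rfl)
    have hIci : HasDerivWithinAt (D1 γ ρ p) (rb2 γ ρ p p) (Ici p) p := by
      rw [I2 hγ hρ hp]
      refine ((hasDerivAt_sb1 hγ hρ hp (by linarith)).hasDerivWithinAt).congr
        (fun σ hσ => ?_) ?_
      · rcases eq_or_lt_of_le (Set.mem_Ici.mp hσ) with h | h
        · rw [← h, D1, if_pos le_rfl, I1 hγ hρ hp]
        · rw [D1, if_neg (not_le.mpr h)]
      · rw [D1, if_pos le_rfl, I1 hγ hρ hp]
    have := hIic.union hIci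
    rw [Set.Iic_union_Ici, hasDerivWithinAt_univ] at this
    rwa [D2, if_pos le_rfl]
  · have heq : D1 γ ρ p =ᶠ[nhds y] sb1 γ ρ p :=
      eventuallyEq_of_mem (Ioi_mem_nhds hgt) fun σ hσ => if_neg (not_le.mpr hσ)
    rw [D2, if_neg (not_le.mpr hgt)]
    exact (hasDerivAt_sb1 hγ hρ hp (by linarith)).congr_of_eventuallyEq heq

lemma continuousAt_rb2 {y : ℝ} (hy : y ≠ 0) : ContinuousAt (rb2 γ ρ p) y := by
  have hc : ContinuousAt (fun σ : ℝ => (σ / p) ^ ((γ - 1) / (2 * γ) - 1 - 1)) y :=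
    (continuousAt_id.div_const p).rpow_const (Or.inl (div_ne_zero hy hp.ne'))
  exact ((((hc.const_mul _).mul_const (1 / p)).const_mul _).mul_const (1 / p)).const_mul _

lemma continuousAt_sb2 {y : ℝ} (hy : y + ((γ - 1) / (γ + 1)) * p ≠ 0) :
    ContinuousAt (sb2 γ ρ p) y := by
  have hadd : ContinuousAt (fun σ : ℝ => σ + ((γ - 1) / (γ + 1)) * p) y :=
    continuousAt_id.add continuousAt_const
  have h3 : ContinuousAt (fun σ : ℝ => (σ + ((γ - 1) / (γ + 1)) * p) ^ (-(3/2) : ℝ)) y :=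
    hadd.rpow_const (Or.inl hy)
  have h5 : ContinuousAt (fun σ : ℝ => (σ + ((γ - 1) / (γ + 1)) * p) ^ (-(5/2) : ℝ)) y :=
    hadd.rpow_const (Or.inl hy)
  exact (((h3.const_mul _).const_mul _).const_mul _).add
    ((continuousAt_id.sub continuousAt_const).mul ((h5.const_mul _).const_mul _))

lemma continuousOn_D2 : ContinuousOn (D2 γ ρ p) (Ioi 0) := by
  have hB : (0:ℝ) ≤ ((γ - 1) / (γ + 1)) * p :=
    mul_nonneg (div_nonneg (by linarith) (by linarith)) hp.le
  intro y hy
  have hy0 : (0:ℝ) < y := hy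
  rcases lt_trichotomy y p with hlt | heq | hgt
  · have heq : D2 γ ρ p =ᶠ[nhds y] rb2 γ ρ p :=
      eventuallyEq_of_mem (Iio_mem_nhds hlt) fun σ hσ => if_pos (le_of_lt hσ)
    exact ((continuousAt_rb2 hγ hρ hp hy0.ne').congr heq.symm).continuousWithinAt
  · rw [heq]
    have hIic : ContinuousWithinAt (D2 γ ρ p) (Iic p) p :=
      ((continuousAt_rb2 hγ hρ hp hp.ne').continuousWithinAt).congr
        (fun σ hσ => if_pos hσ) (if_pos le_rfl)
    have hIci : ContinuousWithinAt (D2 γ ρ p) (Ici p) p := by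
      refine ((continuousAt_sb2 hγ hρ hp (by linarith)).continuousWithinAt).congr
        (fun σ hσ => ?_) ?_
      · rcases eq_or_lt_of_le (Set.mem_Ici.mp hσ) with h | h
        · rw [← h, D2, if_pos le_rfl, I2 hγ hρ hp]
        · rw [D2, if_neg (not_le.mpr h)]
      · rw [D2, if_pos le_rfl, I2 hγ hρ hp]
    have := hIic.union hIci
    rw [Set.Iic_union_Ici] at this
    exact this.mono (subset_univ _)
  · have heq : D2 γ ρ p =ᶠ[nhds y] sb2 γ ρ p :=
      eventuallyEq_of_mem (Ioi_mem_nhds hgt) fun σ hσ => if_neg (not_le.mpr hσ)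
    exact ((continuousAt_sb2 hγ hρ hp (by linarith)).congr heq.symm).continuousWithinAt

lemma contDiffOn_F : ContDiffOn ℝ 2 (F γ ρ p) (Ioi 0) := by
  have h2 : (2 : WithTop ℕ∞) = 1 + 1 := rfl
  rw [h2, contDiffOn_succ_iff_deriv_of_isOpen isOpen_Ioi]
  refine ⟨fun y hy => ((hasDerivAt_F hγ hρ hp hy).differentiableAt).differentiableWithinAt,
    by simp, ?_⟩
  have hD1 : ContDiffOn ℝ 1 (D1 γ ρ p) (Ioi 0) := by
    have h1 : (1 : WithTop ℕ∞) = 0 + 1 := rfl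
    rw [h1, contDiffOn_succ_iff_deriv_of_isOpen isOpen_Ioi]
    refine ⟨fun y hy => ((hasDerivAt_D1 hγ hρ hp hy).differentiableAt).differentiableWithinAt,
      by simp, ?_⟩
    rw [contDiffOn_zero]
    exact (continuousOn_D2 hγ hρ hp).congr fun y hy => (hasDerivAt_D1 hγ hρ hp hy).deriv
  exact hD1.congr fun y hy => (hasDerivAt_F hγ hρ hp hy).deriv

end

end LaxAux

/-- `ψ` is twice continuously differentiable at the base pressure `σ = p_k`. -/
theorem laxPsi_contDiffAt_two
    (γ ρk pk : ℝ) (hγ : 1 < γ) (hρ : 0 < ρk) (hp : 0 < pk) :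
    ContDiffAt ℝ 2 (laxPsi γ ρk pk) pk := by
  have hB : (0:ℝ) ≤ ((γ - 1) / (γ + 1)) * pk :=
    mul_nonneg (div_nonneg (by linarith) (by linarith)) hp.le
  have hcd : ContDiffAt ℝ 2 (LaxAux.F γ ρk pk) pk :=
    (LaxAux.contDiffOn_F hγ hρ hp).contDiffAt (Ioi_mem_nhds hp)
  refine hcd.congr_of_eventuallyEq ?_
  refine Filter.eventuallyEq_of_mem (Ioi_mem_nhds hp) fun σ hσ => ?_
  have hσ0 : (0:ℝ) < σ := hσ
  by_cases h : σ ≤ pk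
  · simp only [laxPsi, LaxAux.F, LaxAux.rb, if_pos h]
  · have hX : (0:ℝ) < σ + ((γ - 1) / (γ + 1)) * pk := by linarith
    have hAρ : (0:ℝ) ≤ (1 - (γ - 1) / (γ + 1)) / ρk :=
      div_nonneg (LaxAux.hA hγ hρ hp (p := pk)).le hρ.le
    simp only [laxPsi, LaxAux.F, LaxAux.sb, if_neg h]
    congr 1
    rw [← div_div, Real.sqrt_div hAρ, LaxAux.rpow_neg_half hX, Real.sqrt_inv,
      div_eq_mul_inv]
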